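/- The volume of the polytope in ℝ⁵ defined by t₁,...,t₅ ≥ 0, t₁ + 2t₂ + 3t₃ + 2t₅ ≤ 1, and 3t₁ + 2t₂ + t₃ + 2t₄ ≤ 1 equals 1/2160. -/

import Mathlib

open MeasureTheory

lemma corner_vol (n : ℕ) : ∀ c : ℝ, 0 ≤ c →
    volume {x : Fin n → ℝ | (∀ i, 0 ≤ x i) ∧ ∑ i, x i ≤ c} =
      ENNReal.ofReal (c ^ n / n.factorial) := by
  induction n with
  | zero =>
    intro c hc
    have h1 : {x : Fin 0 → ℝ | (∀ i, 0 ≤ x i) ∧ ∑ i, x i ≤ c} = Set.univ := by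
      ext x; simp [hc]
    rw [h1]
    rw [volume_pi, Measure.pi_univ]
    simp [Nat.factorial]
  | succ n ih =>
    intro c hc
    set T : Set (ℝ × (Fin n → ℝ)) :=
      {p | 0 ≤ p.1 ∧ (∀ i, 0 ≤ p.2 i) ∧ p.1 + ∑ i, p.2 i ≤ c} with hT
    have hTm : MeasurableSet T := by
      rw [hT]
      apply MeasurableSet.inter
      · exact measurableSet_le measurable_const measurable_fst
      apply MeasurableSet.inter
      · have h3 : {p : ℝ × (Fin n → ℝ) | ∀ i, 0 ≤ p.2 i}
            = ⋂ i, {p : ℝ × (Fin n → ℝ) | 0 ≤ p.2 i} := by ext p; simp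
        show MeasurableSet {p : ℝ × (Fin n → ℝ) | ∀ i, 0 ≤ p.2 i}
        rw [h3]
        exact MeasurableSet.iInter fun i =>
          measurableSet_le measurable_const (show Measurable fun p : ℝ × (Fin n → ℝ) => p.2 i from (measurable_pi_apply i).comp measurable_snd)
      · exact measurableSet_le (measurable_fst.add (Finset.measurable_sum _
          fun i _ => (show Measurable fun p : ℝ × (Fin n → ℝ) => p.2 i from (measurable_pi_apply i).comp measurable_snd))) measurable_const
    have hpre : {x : Fin (n+1) → ℝ | (∀ i, 0 ≤ x i) ∧ ∑ i, x i ≤ c} =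
        (MeasurableEquiv.piFinSuccAbove (fun _ => ℝ) 0) ⁻¹' T := by
      ext x
      have happ : (MeasurableEquiv.piFinSuccAbove (fun _ : Fin (n+1) => ℝ) 0) x =
          (x 0, fun j => x (Fin.succAbove 0 j)) := rfl
      simp only [Set.mem_preimage, happ, hT, Set.mem_setOf_eq,
        Fin.forall_fin_succ, Fin.sum_univ_succ, Fin.succAbove_zero]
      tauto
    rw [hpre, (volume_preserving_piFinSuccAbove (fun _ : Fin (n+1) => ℝ) 0).measure_preimage
      hTm.nullMeasurableSet]
    rw [show ((volume : Measure (ℝ × (Fin n → ℝ)))) = (volume : Measure ℝ).prod volume from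
      Measure.volume_eq_prod _ _, Measure.prod_apply hTm]
    have hslice : ∀ a : ℝ, volume (Prod.mk a ⁻¹' T) =
        Set.indicator (Set.Icc 0 c)
          (fun a => ENNReal.ofReal ((c - a) ^ n / n.factorial)) a := by
      intro a
      by_cases ha : a ∈ Set.Icc (0:ℝ) c
      · rw [Set.indicator_of_mem ha]
        have hset : Prod.mk a ⁻¹' T = {y : Fin n → ℝ | (∀ i, 0 ≤ y i) ∧ ∑ i, y i ≤ c - a} := by
          ext y
          simp only [hT, Set.mem_preimage, Set.mem_setOf_eq]
          constructor
          · rintro ⟨_, h2, h3⟩; exact ⟨h2, by linarith⟩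
          · rintro ⟨h2, h3⟩; exact ⟨ha.1, h2, by linarith⟩
        rw [hset, ih (c - a) (by linarith [ha.2])]
      · rw [Set.indicator_of_notMem ha]
        have hset : Prod.mk a ⁻¹' T = ∅ := by
          ext y
          simp only [hT, Set.mem_preimage, Set.mem_setOf_eq, Set.mem_empty_iff_false,
            iff_false]
          rintro ⟨h1, h2, h3⟩
          have hs0 : (0:ℝ) ≤ ∑ i, y i := Finset.sum_nonneg fun i _ => h2 i
          exact ha ⟨h1, by linarith⟩
        simp [hset]
    rw [lintegral_congr hslice, lintegral_indicator measurableSet_Icc]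
    have hcont : Continuous fun a : ℝ => (c - a) ^ n / n.factorial := by
      fun_prop
    have hint : IntegrableOn (fun a : ℝ => (c - a) ^ n / n.factorial) (Set.Icc 0 c) :=
      hcont.integrableOn_Icc
    have hnn : 0 ≤ᵐ[volume.restrict (Set.Icc 0 c)]
        fun a : ℝ => (c - a) ^ n / n.factorial := by
      refine (ae_restrict_iff' measurableSet_Icc).2 (Filter.Eventually.of_forall ?_)
      intro x hx
      have : 0 ≤ c - x := by linarith [hx.2]
      positivity
    rw [← ofReal_integral_eq_lintegral_ofReal hint hnn]
    congr 1
    rw [MeasureTheory.integral_Icc_eq_integral_Ioc, ← intervalIntegral.integral_of_le hc]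
    have h1 : ∫ a in (0:ℝ)..c, (c - a) ^ n / n.factorial
        = (∫ a in (0:ℝ)..c, (c - a) ^ n) / n.factorial := by
      rw [intervalIntegral.integral_div]
    rw [h1]
    have h2 : ∫ a in (0:ℝ)..c, (c - a) ^ n = ∫ a in (c - c)..(c - 0), a ^ n :=
      intervalIntegral.integral_comp_sub_left (fun x => x ^ n) c
    rw [h2]
    simp only [sub_self, sub_zero, integral_pow]
    rw [Nat.factorial_succ]
    push_cast
    have hnf : (0:ℝ) < n.factorial := by positivity
    field_simp
    simp

lemma hyperplane_null (c : Fin 5 → ℝ) (i : Fin 5) (hci : c i ≠ 0) :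
    volume {t : Fin 5 → ℝ | ∑ j, c j * t j = 0} = 0 := by
  set f : (Fin 5 → ℝ) →ₗ[ℝ] ℝ := ∑ j, c j • LinearMap.proj j with hf
  have hset : {t : Fin 5 → ℝ | ∑ j, c j * t j = 0} = (LinearMap.ker f : Set (Fin 5 → ℝ)) := by
    ext t
    simp [hf, LinearMap.sum_apply, LinearMap.smul_apply, LinearMap.proj_apply, smul_eq_mul]
  rw [hset]
  apply Measure.addHaar_submodule
  rw [Ne, LinearMap.ker_eq_top]
  intro h
  have h2 : f (Pi.single i 1) = c i := by
    simp [hf, LinearMap.sum_apply, LinearMap.smul_apply, LinearMap.proj_apply, smul_eq_mul,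
      Pi.single_apply, mul_ite, Finset.sum_ite_eq']
  rw [h] at h2
  simp at h2
  exact hci h2.symm

def Hpl (c : Fin 5 → ℝ) : Set (Fin 5 → ℝ) := {t | ∑ j, c j * t j = 0}

def Dl : Set (Fin 5 → ℝ) := {x | (∀ i, 0 ≤ x i) ∧ ∑ i, x i ≤ 1}

lemma Dl_vol : volume Dl = ENNReal.ofReal (1/120) := by
  have h := corner_vol 5 1 zero_le_one
  norm_num [Nat.factorial] at h
  exact h


noncomputable def M1 : Matrix (Fin 5) (Fin 5) ℝ :=
  !![0, 0, 0, 0, 1/4;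
     0, 0, 0, 1/2, 0;
     0, 1/3, 1/3, 0, 1/4;
     0, 0, 1/3, 0, 0;
     1/2, 0, 0, 0, 0]

def S1 : Set (Fin 5 → ℝ) :=
  {t | 0 ≤ 2 * t 4 ∧ 0 ≤ -3 * t 0 + 3 * t 2 - 3 * t 3 ∧ 0 ≤ 3 * t 3 ∧ 0 ≤ 2 * t 1 ∧
    0 ≤ 4 * t 0 ∧ t 0 + 2 * t 1 + 3 * t 2 + 2 * t 4 ≤ 1}

lemma S1_meas : MeasurableSet S1 := by
  unfold S1
  simp only [Set.setOf_and]
  repeat' apply MeasurableSet.inter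
  all_goals apply measurableSet_le (by fun_prop) (by fun_prop)

lemma S1_eq : S1 = Matrix.toLin' M1 '' Dl := by
  ext t
  constructor
  · rintro ⟨h0, h1, h2, h3, h4, h5⟩
    refine ⟨![2 * t 4, -3 * t 0 + 3 * t 2 - 3 * t 3, 3 * t 3, 2 * t 1, 4 * t 0], ⟨?_, ?_⟩, ?_⟩
    · intro j; fin_cases j <;> simp_all
    · show _ ≤ (1:ℝ)
      rw [Fin.sum_univ_five]
      norm_num [Matrix.cons_val_zero, Matrix.cons_val_one, Matrix.head_cons, Matrix.cons_val_two, Matrix.tail_cons, Matrix.cons_val_three, Matrix.cons_val_four]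
      linarith
    · funext j
      fin_cases j <;>
        · simp [M1, Matrix.toLin'_apply, Matrix.mulVec, dotProduct, Fin.sum_univ_five]
          try ring
  · rintro ⟨x, ⟨hx, hsum⟩, rfl⟩
    have h0 := hx 0; have h1 := hx 1; have h2 := hx 2; have h3 := hx 3; have h4 := hx 4
    rw [Fin.sum_univ_five] at hsum
    refine ⟨?_, ?_, ?_, ?_, ?_, ?_⟩ <;>
      · simp only [Matrix.toLin'_apply, M1, Matrix.mulVec, dotProduct, Fin.sum_univ_five,
          Matrix.cons_val', Matrix.cons_val_zero, Matrix.cons_val_one, Matrix.head_cons, Matrix.cons_val_two, Matrix.tail_cons, Matrix.cons_val_three, Matrix.cons_val_four,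
          Matrix.empty_val', Matrix.cons_val_fin_one, Matrix.head_fin_const,
          Matrix.of_apply]
        linarith

lemma S1_vol : volume S1 = ENNReal.ofReal (1/17280) := by
  rw [S1_eq, Measure.addHaar_image_linearMap, LinearMap.det_toLin']
  have hdet : Matrix.det M1 = -(1/144) := by
    simp [M1, Matrix.det_succ_row_zero, Fin.sum_univ_succ]
    simp +decide [Fin.succAbove]
    norm_num
  rw [hdet, Dl_vol, abs_of_neg (by norm_num)]
  rw [← ENNReal.ofReal_mul (by norm_num)]
  norm_num


noncomputable def M2 : Matrix (Fin 5) (Fin 5) ℝ :=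
  !![0, 0, 0, 1/4, 1/3;
     0, 0, 1/2, 0, 0;
     0, 0, 0, 1/4, 0;
     0, 1/2, 0, 0, 0;
     1/2, 1/2, 0, 0, 1/3]

def S2 : Set (Fin 5 → ℝ) :=
  {t | 0 ≤ -2 * t 0 + 2 * t 2 - 2 * t 3 + 2 * t 4 ∧ 0 ≤ 2 * t 3 ∧ 0 ≤ 2 * t 1 ∧ 0 ≤ 4 * t 2 ∧
    0 ≤ 3 * t 0 - 3 * t 2 ∧ t 0 + 2 * t 1 + 3 * t 2 + 2 * t 4 ≤ 1}

lemma S2_meas : MeasurableSet S2 := by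
  unfold S2
  simp only [Set.setOf_and]
  repeat' apply MeasurableSet.inter
  all_goals apply measurableSet_le (by fun_prop) (by fun_prop)

lemma S2_eq : S2 = Matrix.toLin' M2 '' Dl := by
  ext t
  constructor
  · rintro ⟨h0, h1, h2, h3, h4, h5⟩
    refine ⟨![-2 * t 0 + 2 * t 2 - 2 * t 3 + 2 * t 4, 2 * t 3, 2 * t 1, 4 * t 2, 3 * t 0 - 3 * t 2], ⟨?_, ?_⟩, ?_⟩
    · intro j; fin_cases j <;> simp_all
    · show _ ≤ (1:ℝ)
      rw [Fin.sum_univ_five]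
      norm_num [Matrix.cons_val_zero, Matrix.cons_val_one, Matrix.head_cons, Matrix.cons_val_two, Matrix.tail_cons, Matrix.cons_val_three, Matrix.cons_val_four]
      linarith
    · funext j
      fin_cases j <;>
        · simp [M2, Matrix.toLin'_apply, Matrix.mulVec, dotProduct, Fin.sum_univ_five]
          try ring
  · rintro ⟨x, ⟨hx, hsum⟩, rfl⟩
    have h0 := hx 0; have h1 := hx 1; have h2 := hx 2; have h3 := hx 3; have h4 := hx 4
    rw [Fin.sum_univ_five] at hsum
    refine ⟨?_, ?_, ?_, ?_, ?_, ?_⟩ <;>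
      · simp only [Matrix.toLin'_apply, M2, Matrix.mulVec, dotProduct, Fin.sum_univ_five,
          Matrix.cons_val', Matrix.cons_val_zero, Matrix.cons_val_one, Matrix.head_cons, Matrix.cons_val_two, Matrix.tail_cons, Matrix.cons_val_three, Matrix.cons_val_four,
          Matrix.empty_val', Matrix.cons_val_fin_one, Matrix.head_fin_const,
          Matrix.of_apply]
        linarith

lemma S2_vol : volume S2 = ENNReal.ofReal (1/11520) := by
  rw [S2_eq, Measure.addHaar_image_linearMap, LinearMap.det_toLin']
  have hdet : Matrix.det M2 = -(1/96) := by
    simp [M2, Matrix.det_succ_row_zero, Fin.sum_univ_succ]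
    simp +decide [Fin.succAbove]
    norm_num
  rw [hdet, Dl_vol, abs_of_neg (by norm_num)]
  rw [← ENNReal.ofReal_mul (by norm_num)]
  norm_num


noncomputable def M3 : Matrix (Fin 5) (Fin 5) ℝ :=
  !![0, 0, 0, 0, 1/4;
     0, 0, 0, 1/2, 0;
     0, 0, 1/3, 0, 1/4;
     0, 1/2, 1/3, 0, 0;
     1/2, 1/2, 0, 0, 0]

def S3 : Set (Fin 5 → ℝ) :=
  {t | 0 ≤ -2 * t 0 + 2 * t 2 - 2 * t 3 + 2 * t 4 ∧ 0 ≤ 2 * t 0 - 2 * t 2 + 2 * t 3 ∧ 0 ≤ -3 * t 0 + 3 * t 2 ∧ 0 ≤ 2 * t 1 ∧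
    0 ≤ 4 * t 0 ∧ t 0 + 2 * t 1 + 3 * t 2 + 2 * t 4 ≤ 1}

lemma S3_meas : MeasurableSet S3 := by
  unfold S3
  simp only [Set.setOf_and]
  repeat' apply MeasurableSet.inter
  all_goals apply measurableSet_le (by fun_prop) (by fun_prop)

lemma S3_eq : S3 = Matrix.toLin' M3 '' Dl := by
  ext t
  constructor
  · rintro ⟨h0, h1, h2, h3, h4, h5⟩
    refine ⟨![-2 * t 0 + 2 * t 2 - 2 * t 3 + 2 * t 4, 2 * t 0 - 2 * t 2 + 2 * t 3, -3 * t 0 + 3 * t 2, 2 * t 1, 4 * t 0], ⟨?_, ?_⟩, ?_⟩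
    · intro j; fin_cases j <;> simp_all
    · show _ ≤ (1:ℝ)
      rw [Fin.sum_univ_five]
      norm_num [Matrix.cons_val_zero, Matrix.cons_val_one, Matrix.head_cons, Matrix.cons_val_two, Matrix.tail_cons, Matrix.cons_val_three, Matrix.cons_val_four]
      linarith
    · funext j
      fin_cases j <;>
        · simp [M3, Matrix.toLin'_apply, Matrix.mulVec, dotProduct, Fin.sum_univ_five]
          try ring
  · rintro ⟨x, ⟨hx, hsum⟩, rfl⟩
    have h0 := hx 0; have h1 := hx 1; have h2 := hx 2; have h3 := hx 3; have h4 := hx 4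
    rw [Fin.sum_univ_five] at hsum
    refine ⟨?_, ?_, ?_, ?_, ?_, ?_⟩ <;>
      · simp only [Matrix.toLin'_apply, M3, Matrix.mulVec, dotProduct, Fin.sum_univ_five,
          Matrix.cons_val', Matrix.cons_val_zero, Matrix.cons_val_one, Matrix.head_cons, Matrix.cons_val_two, Matrix.tail_cons, Matrix.cons_val_three, Matrix.cons_val_four,
          Matrix.empty_val', Matrix.cons_val_fin_one, Matrix.head_fin_const,
          Matrix.of_apply]
        linarith

lemma S3_vol : volume S3 = ENNReal.ofReal (1/11520) := by
  rw [S3_eq, Measure.addHaar_image_linearMap, LinearMap.det_toLin']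
  have hdet : Matrix.det M3 = 1/96 := by
    simp [M3, Matrix.det_succ_row_zero, Fin.sum_univ_succ]
    simp +decide [Fin.succAbove]
    norm_num
  rw [hdet, Dl_vol, abs_of_pos (by norm_num)]
  rw [← ENNReal.ofReal_mul (by norm_num)]
  norm_num


noncomputable def M4 : Matrix (Fin 5) (Fin 5) ℝ :=
  !![0, 0, 1/4, 1/3, 1/3;
     0, 1/2, 0, 0, 0;
     0, 0, 1/4, 0, 0;
     1/2, 0, 0, 0, 0;
     0, 0, 0, 0, 1/3]

def S4 : Set (Fin 5 → ℝ) :=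
  {t | 0 ≤ 2 * t 3 ∧ 0 ≤ 2 * t 1 ∧ 0 ≤ 4 * t 2 ∧ 0 ≤ 3 * t 0 - 3 * t 2 - 3 * t 4 ∧
    0 ≤ 3 * t 4 ∧ 3 * t 0 + 2 * t 1 + t 2 + 2 * t 3 ≤ 1}

lemma S4_meas : MeasurableSet S4 := by
  unfold S4
  simp only [Set.setOf_and]
  repeat' apply MeasurableSet.inter
  all_goals apply measurableSet_le (by fun_prop) (by fun_prop)

lemma S4_eq : S4 = Matrix.toLin' M4 '' Dl := by
  ext t
  constructor
  · rintro ⟨h0, h1, h2, h3, h4, h5⟩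
    refine ⟨![2 * t 3, 2 * t 1, 4 * t 2, 3 * t 0 - 3 * t 2 - 3 * t 4, 3 * t 4], ⟨?_, ?_⟩, ?_⟩
    · intro j; fin_cases j <;> simp_all
    · show _ ≤ (1:ℝ)
      rw [Fin.sum_univ_five]
      norm_num [Matrix.cons_val_zero, Matrix.cons_val_one, Matrix.head_cons, Matrix.cons_val_two, Matrix.tail_cons, Matrix.cons_val_three, Matrix.cons_val_four]
      linarith
    · funext j
      fin_cases j <;>
        · simp [M4, Matrix.toLin'_apply, Matrix.mulVec, dotProduct, Fin.sum_univ_five]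
          try ring
  · rintro ⟨x, ⟨hx, hsum⟩, rfl⟩
    have h0 := hx 0; have h1 := hx 1; have h2 := hx 2; have h3 := hx 3; have h4 := hx 4
    rw [Fin.sum_univ_five] at hsum
    refine ⟨?_, ?_, ?_, ?_, ?_, ?_⟩ <;>
      · simp only [Matrix.toLin'_apply, M4, Matrix.mulVec, dotProduct, Fin.sum_univ_five,
          Matrix.cons_val', Matrix.cons_val_zero, Matrix.cons_val_one, Matrix.head_cons, Matrix.cons_val_two, Matrix.tail_cons, Matrix.cons_val_three, Matrix.cons_val_four,
          Matrix.empty_val', Matrix.cons_val_fin_one, Matrix.head_fin_const,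
          Matrix.of_apply]
        linarith

lemma S4_vol : volume S4 = ENNReal.ofReal (1/17280) := by
  rw [S4_eq, Measure.addHaar_image_linearMap, LinearMap.det_toLin']
  have hdet : Matrix.det M4 = -(1/144) := by
    simp [M4, Matrix.det_succ_row_zero, Fin.sum_univ_succ]
    simp +decide [Fin.succAbove]
    norm_num
  rw [hdet, Dl_vol, abs_of_neg (by norm_num)]
  rw [← ENNReal.ofReal_mul (by norm_num)]
  norm_num


noncomputable def M5 : Matrix (Fin 5) (Fin 5) ℝ :=
  !![0, 0, 0, 1/4, 1/3;
     0, 0, 1/2, 0, 0;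
     0, 0, 0, 1/4, 0;
     1/2, 1/2, 0, 0, 0;
     0, 1/2, 0, 0, 1/3]

def S5 : Set (Fin 5 → ℝ) :=
  {t | 0 ≤ 2 * t 0 - 2 * t 2 + 2 * t 3 - 2 * t 4 ∧ 0 ≤ -2 * t 0 + 2 * t 2 + 2 * t 4 ∧ 0 ≤ 2 * t 1 ∧ 0 ≤ 4 * t 2 ∧
    0 ≤ 3 * t 0 - 3 * t 2 ∧ 3 * t 0 + 2 * t 1 + t 2 + 2 * t 3 ≤ 1}

lemma S5_meas : MeasurableSet S5 := by
  unfold S5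
  simp only [Set.setOf_and]
  repeat' apply MeasurableSet.inter
  all_goals apply measurableSet_le (by fun_prop) (by fun_prop)

lemma S5_eq : S5 = Matrix.toLin' M5 '' Dl := by
  ext t
  constructor
  · rintro ⟨h0, h1, h2, h3, h4, h5⟩
    refine ⟨![2 * t 0 - 2 * t 2 + 2 * t 3 - 2 * t 4, -2 * t 0 + 2 * t 2 + 2 * t 4, 2 * t 1, 4 * t 2, 3 * t 0 - 3 * t 2], ⟨?_, ?_⟩, ?_⟩
    · intro j; fin_cases j <;> simp_all
    · show _ ≤ (1:ℝ)
      rw [Fin.sum_univ_five]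
      norm_num [Matrix.cons_val_zero, Matrix.cons_val_one, Matrix.head_cons, Matrix.cons_val_two, Matrix.tail_cons, Matrix.cons_val_three, Matrix.cons_val_four]
      linarith
    · funext j
      fin_cases j <;>
        · simp [M5, Matrix.toLin'_apply, Matrix.mulVec, dotProduct, Fin.sum_univ_five]
          try ring
  · rintro ⟨x, ⟨hx, hsum⟩, rfl⟩
    have h0 := hx 0; have h1 := hx 1; have h2 := hx 2; have h3 := hx 3; have h4 := hx 4
    rw [Fin.sum_univ_five] at hsum
    refine ⟨?_, ?_, ?_, ?_, ?_, ?_⟩ <;>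
      · simp only [Matrix.toLin'_apply, M5, Matrix.mulVec, dotProduct, Fin.sum_univ_five,
          Matrix.cons_val', Matrix.cons_val_zero, Matrix.cons_val_one, Matrix.head_cons, Matrix.cons_val_two, Matrix.tail_cons, Matrix.cons_val_three, Matrix.cons_val_four,
          Matrix.empty_val', Matrix.cons_val_fin_one, Matrix.head_fin_const,
          Matrix.of_apply]
        linarith

lemma S5_vol : volume S5 = ENNReal.ofReal (1/11520) := by
  rw [S5_eq, Measure.addHaar_image_linearMap, LinearMap.det_toLin']
  have hdet : Matrix.det M5 = 1/96 := by
    simp [M5, Matrix.det_succ_row_zero, Fin.sum_univ_succ]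
    simp +decide [Fin.succAbove]
    norm_num
  rw [hdet, Dl_vol, abs_of_pos (by norm_num)]
  rw [← ENNReal.ofReal_mul (by norm_num)]
  norm_num


noncomputable def M6 : Matrix (Fin 5) (Fin 5) ℝ :=
  !![0, 0, 0, 0, 1/4;
     0, 0, 0, 1/2, 0;
     0, 0, 1/3, 0, 1/4;
     1/2, 1/2, 1/3, 0, 0;
     0, 1/2, 0, 0, 0]

def S6 : Set (Fin 5 → ℝ) :=
  {t | 0 ≤ 2 * t 0 - 2 * t 2 + 2 * t 3 - 2 * t 4 ∧ 0 ≤ 2 * t 4 ∧ 0 ≤ -3 * t 0 + 3 * t 2 ∧ 0 ≤ 2 * t 1 ∧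
    0 ≤ 4 * t 0 ∧ 3 * t 0 + 2 * t 1 + t 2 + 2 * t 3 ≤ 1}

lemma S6_meas : MeasurableSet S6 := by
  unfold S6
  simp only [Set.setOf_and]
  repeat' apply MeasurableSet.inter
  all_goals apply measurableSet_le (by fun_prop) (by fun_prop)

lemma S6_eq : S6 = Matrix.toLin' M6 '' Dl := by
  ext t
  constructor
  · rintro ⟨h0, h1, h2, h3, h4, h5⟩
    refine ⟨![2 * t 0 - 2 * t 2 + 2 * t 3 - 2 * t 4, 2 * t 4, -3 * t 0 + 3 * t 2, 2 * t 1, 4 * t 0], ⟨?_, ?_⟩, ?_⟩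
    · intro j; fin_cases j <;> simp_all
    · show _ ≤ (1:ℝ)
      rw [Fin.sum_univ_five]
      norm_num [Matrix.cons_val_zero, Matrix.cons_val_one, Matrix.head_cons, Matrix.cons_val_two, Matrix.tail_cons, Matrix.cons_val_three, Matrix.cons_val_four]
      linarith
    · funext j
      fin_cases j <;>
        · simp [M6, Matrix.toLin'_apply, Matrix.mulVec, dotProduct, Fin.sum_univ_five]
          try ring
  · rintro ⟨x, ⟨hx, hsum⟩, rfl⟩
    have h0 := hx 0; have h1 := hx 1; have h2 := hx 2; have h3 := hx 3; have h4 := hx 4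
    rw [Fin.sum_univ_five] at hsum
    refine ⟨?_, ?_, ?_, ?_, ?_, ?_⟩ <;>
      · simp only [Matrix.toLin'_apply, M6, Matrix.mulVec, dotProduct, Fin.sum_univ_five,
          Matrix.cons_val', Matrix.cons_val_zero, Matrix.cons_val_one, Matrix.head_cons, Matrix.cons_val_two, Matrix.tail_cons, Matrix.cons_val_three, Matrix.cons_val_four,
          Matrix.empty_val', Matrix.cons_val_fin_one, Matrix.head_fin_const,
          Matrix.of_apply]
        linarith

lemma S6_vol : volume S6 = ENNReal.ofReal (1/11520) := by
  rw [S6_eq, Measure.addHaar_image_linearMap, LinearMap.det_toLin']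
  have hdet : Matrix.det M6 = -(1/96) := by
    simp [M6, Matrix.det_succ_row_zero, Fin.sum_univ_succ]
    simp +decide [Fin.succAbove]
    norm_num
  rw [hdet, Dl_vol, abs_of_neg (by norm_num)]
  rw [← ENNReal.ofReal_mul (by norm_num)]
  norm_num


lemma cover : {t : Fin 5 → ℝ | (∀ i, 0 ≤ t i) ∧
        t 0 + 2 * t 1 + 3 * t 2 + 2 * t 4 ≤ 1 ∧
        3 * t 0 + 2 * t 1 + t 2 + 2 * t 3 ≤ 1} =
      S1 ∪ (S2 ∪ (S3 ∪ (S4 ∪ (S5 ∪ S6)))) := by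
  ext t
  constructor
  · rintro ⟨ht, ha, hb⟩
    have h0 := ht 0; have h1 := ht 1; have h2 := ht 2; have h3 := ht 3; have h4 := ht 4
    rcases le_total (t 0 + t 3) (t 2 + t 4) with he | he
    · rcases le_total (t 3) (t 2 - t 0) with hk | hk
      · exact Or.inl ⟨by linarith, by linarith, by linarith, by linarith, by linarith, ha⟩
      · rcases le_total (t 0) (t 2) with hl | hl
        · exact Or.inr (Or.inr (Or.inl
            ⟨by linarith, by linarith, by linarith, by linarith, by linarith, ha⟩))
        · exact Or.inr (Or.inl
            ⟨by linarith, by linarith, by linarith, by linarith, by linarith, ha⟩)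
    · rcases le_total (t 4) (t 0 - t 2) with hk | hk
      · exact Or.inr (Or.inr (Or.inr (Or.inl
          ⟨by linarith, by linarith, by linarith, by linarith, by linarith, hb⟩)))
      · rcases le_total (t 0) (t 2) with hl | hl
        · exact Or.inr (Or.inr (Or.inr (Or.inr (Or.inr
            ⟨by linarith, by linarith, by linarith, by linarith, by linarith, hb⟩))))
        · exact Or.inr (Or.inr (Or.inr (Or.inr (Or.inl
            ⟨by linarith, by linarith, by linarith, by linarith, by linarith, hb⟩))))
  · rintro (h | h | h | h | h | h) <;>
      obtain ⟨c0, c1, c2, c3, c4, c5⟩ := h <;>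
      refine ⟨fun i => ?_, by linarith, by linarith⟩ <;>
      fin_cases i <;>
      first
        | (show (0:ℝ) ≤ t 0; linarith)
        | (show (0:ℝ) ≤ t 1; linarith)
        | (show (0:ℝ) ≤ t 2; linarith)
        | (show (0:ℝ) ≤ t 3; linarith)
        | (show (0:ℝ) ≤ t 4; linarith)


def Nset : Set (Fin 5 → ℝ) :=
  Hpl ![0, 0, 0, 1, 0] ∪ (Hpl ![1, 0, -1, 0, 0] ∪ (Hpl ![1, 0, -1, 1, 0] ∪
    (Hpl ![1, 0, -1, 0, -1] ∪ Hpl ![1, 0, -1, 1, -1])))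

lemma Nset_null : volume Nset = 0 := by
  unfold Nset
  refine measure_union_null (hyperplane_null _ 3 (by simp)) ?_
  refine measure_union_null (hyperplane_null _ 0 (by norm_num)) ?_
  refine measure_union_null (hyperplane_null _ 0 (by norm_num)) ?_
  exact measure_union_null (hyperplane_null _ 0 (by norm_num))
    (hyperplane_null _ 0 (by norm_num))


lemma pair_1_2 : S1 ∩ S2 ⊆ Nset := by
  rintro t ⟨⟨a0, a1, a2, a3, a4, a5⟩, ⟨b0, b1, b2, b3, b4, b5⟩⟩
  have hmem : t ∈ Hpl ![0, 0, 0, 1, 0] := by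
    show ∑ j, _ = (0:ℝ)
    rw [Fin.sum_univ_five]
    norm_num [Matrix.cons_val_zero, Matrix.cons_val_one, Matrix.head_cons, Matrix.cons_val_two, Matrix.tail_cons, Matrix.cons_val_three, Matrix.cons_val_four]
    linarith
  exact Or.inl hmem

lemma pair_1_3 : S1 ∩ S3 ⊆ Nset := by
  rintro t ⟨⟨a0, a1, a2, a3, a4, a5⟩, ⟨b0, b1, b2, b3, b4, b5⟩⟩
  have hmem : t ∈ Hpl ![1, 0, -1, 1, 0] := by
    show ∑ j, _ = (0:ℝ)
    rw [Fin.sum_univ_five]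
    norm_num [Matrix.cons_val_zero, Matrix.cons_val_one, Matrix.head_cons, Matrix.cons_val_two, Matrix.tail_cons, Matrix.cons_val_three, Matrix.cons_val_four]
    linarith
  exact Or.inr (Or.inr (Or.inl hmem))

lemma pair_1_4 : S1 ∩ S4 ⊆ Nset := by
  rintro t ⟨⟨a0, a1, a2, a3, a4, a5⟩, ⟨b0, b1, b2, b3, b4, b5⟩⟩
  have hmem : t ∈ Hpl ![1, 0, -1, 1, -1] := by
    show ∑ j, _ = (0:ℝ)
    rw [Fin.sum_univ_five]
    norm_num [Matrix.cons_val_zero, Matrix.cons_val_one, Matrix.head_cons, Matrix.cons_val_two, Matrix.tail_cons, Matrix.cons_val_three, Matrix.cons_val_four]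
    linarith
  exact Or.inr (Or.inr (Or.inr (Or.inr (hmem))))

lemma pair_1_5 : S1 ∩ S5 ⊆ Nset := by
  rintro t ⟨⟨a0, a1, a2, a3, a4, a5⟩, ⟨b0, b1, b2, b3, b4, b5⟩⟩
  have hmem : t ∈ Hpl ![1, 0, -1, 1, -1] := by
    show ∑ j, _ = (0:ℝ)
    rw [Fin.sum_univ_five]
    norm_num [Matrix.cons_val_zero, Matrix.cons_val_one, Matrix.head_cons, Matrix.cons_val_two, Matrix.tail_cons, Matrix.cons_val_three, Matrix.cons_val_four]
    linarith
  exact Or.inr (Or.inr (Or.inr (Or.inr (hmem))))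

lemma pair_1_6 : S1 ∩ S6 ⊆ Nset := by
  rintro t ⟨⟨a0, a1, a2, a3, a4, a5⟩, ⟨b0, b1, b2, b3, b4, b5⟩⟩
  have hmem : t ∈ Hpl ![1, 0, -1, 1, -1] := by
    show ∑ j, _ = (0:ℝ)
    rw [Fin.sum_univ_five]
    norm_num [Matrix.cons_val_zero, Matrix.cons_val_one, Matrix.head_cons, Matrix.cons_val_two, Matrix.tail_cons, Matrix.cons_val_three, Matrix.cons_val_four]
    linarith
  exact Or.inr (Or.inr (Or.inr (Or.inr (hmem))))

lemma pair_2_3 : S2 ∩ S3 ⊆ Nset := by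
  rintro t ⟨⟨a0, a1, a2, a3, a4, a5⟩, ⟨b0, b1, b2, b3, b4, b5⟩⟩
  have hmem : t ∈ Hpl ![1, 0, -1, 0, 0] := by
    show ∑ j, _ = (0:ℝ)
    rw [Fin.sum_univ_five]
    norm_num [Matrix.cons_val_zero, Matrix.cons_val_one, Matrix.head_cons, Matrix.cons_val_two, Matrix.tail_cons, Matrix.cons_val_three, Matrix.cons_val_four]
    linarith
  exact Or.inr (Or.inl hmem)

lemma pair_2_4 : S2 ∩ S4 ⊆ Nset := by
  rintro t ⟨⟨a0, a1, a2, a3, a4, a5⟩, ⟨b0, b1, b2, b3, b4, b5⟩⟩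
  have hmem : t ∈ Hpl ![1, 0, -1, 1, -1] := by
    show ∑ j, _ = (0:ℝ)
    rw [Fin.sum_univ_five]
    norm_num [Matrix.cons_val_zero, Matrix.cons_val_one, Matrix.head_cons, Matrix.cons_val_two, Matrix.tail_cons, Matrix.cons_val_three, Matrix.cons_val_four]
    linarith
  exact Or.inr (Or.inr (Or.inr (Or.inr (hmem))))

lemma pair_2_5 : S2 ∩ S5 ⊆ Nset := by
  rintro t ⟨⟨a0, a1, a2, a3, a4, a5⟩, ⟨b0, b1, b2, b3, b4, b5⟩⟩
  have hmem : t ∈ Hpl ![1, 0, -1, 1, -1] := by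
    show ∑ j, _ = (0:ℝ)
    rw [Fin.sum_univ_five]
    norm_num [Matrix.cons_val_zero, Matrix.cons_val_one, Matrix.head_cons, Matrix.cons_val_two, Matrix.tail_cons, Matrix.cons_val_three, Matrix.cons_val_four]
    linarith
  exact Or.inr (Or.inr (Or.inr (Or.inr (hmem))))

lemma pair_2_6 : S2 ∩ S6 ⊆ Nset := by
  rintro t ⟨⟨a0, a1, a2, a3, a4, a5⟩, ⟨b0, b1, b2, b3, b4, b5⟩⟩
  have hmem : t ∈ Hpl ![1, 0, -1, 1, -1] := by
    show ∑ j, _ = (0:ℝ)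
    rw [Fin.sum_univ_five]
    norm_num [Matrix.cons_val_zero, Matrix.cons_val_one, Matrix.head_cons, Matrix.cons_val_two, Matrix.tail_cons, Matrix.cons_val_three, Matrix.cons_val_four]
    linarith
  exact Or.inr (Or.inr (Or.inr (Or.inr (hmem))))

lemma pair_3_4 : S3 ∩ S4 ⊆ Nset := by
  rintro t ⟨⟨a0, a1, a2, a3, a4, a5⟩, ⟨b0, b1, b2, b3, b4, b5⟩⟩
  have hmem : t ∈ Hpl ![1, 0, -1, 1, -1] := by
    show ∑ j, _ = (0:ℝ)
    rw [Fin.sum_univ_five]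
    norm_num [Matrix.cons_val_zero, Matrix.cons_val_one, Matrix.head_cons, Matrix.cons_val_two, Matrix.tail_cons, Matrix.cons_val_three, Matrix.cons_val_four]
    linarith
  exact Or.inr (Or.inr (Or.inr (Or.inr (hmem))))

lemma pair_3_5 : S3 ∩ S5 ⊆ Nset := by
  rintro t ⟨⟨a0, a1, a2, a3, a4, a5⟩, ⟨b0, b1, b2, b3, b4, b5⟩⟩
  have hmem : t ∈ Hpl ![1, 0, -1, 1, -1] := by
    show ∑ j, _ = (0:ℝ)
    rw [Fin.sum_univ_five]
    norm_num [Matrix.cons_val_zero, Matrix.cons_val_one, Matrix.head_cons, Matrix.cons_val_two, Matrix.tail_cons, Matrix.cons_val_three, Matrix.cons_val_four]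
    linarith
  exact Or.inr (Or.inr (Or.inr (Or.inr (hmem))))

lemma pair_3_6 : S3 ∩ S6 ⊆ Nset := by
  rintro t ⟨⟨a0, a1, a2, a3, a4, a5⟩, ⟨b0, b1, b2, b3, b4, b5⟩⟩
  have hmem : t ∈ Hpl ![1, 0, -1, 1, -1] := by
    show ∑ j, _ = (0:ℝ)
    rw [Fin.sum_univ_five]
    norm_num [Matrix.cons_val_zero, Matrix.cons_val_one, Matrix.head_cons, Matrix.cons_val_two, Matrix.tail_cons, Matrix.cons_val_three, Matrix.cons_val_four]
    linarith
  exact Or.inr (Or.inr (Or.inr (Or.inr (hmem))))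

lemma pair_4_5 : S4 ∩ S5 ⊆ Nset := by
  rintro t ⟨⟨a0, a1, a2, a3, a4, a5⟩, ⟨b0, b1, b2, b3, b4, b5⟩⟩
  have hmem : t ∈ Hpl ![1, 0, -1, 0, -1] := by
    show ∑ j, _ = (0:ℝ)
    rw [Fin.sum_univ_five]
    norm_num [Matrix.cons_val_zero, Matrix.cons_val_one, Matrix.head_cons, Matrix.cons_val_two, Matrix.tail_cons, Matrix.cons_val_three, Matrix.cons_val_four]
    linarith
  exact Or.inr (Or.inr (Or.inr (Or.inl hmem)))

lemma pair_4_6 : S4 ∩ S6 ⊆ Nset := by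
  rintro t ⟨⟨a0, a1, a2, a3, a4, a5⟩, ⟨b0, b1, b2, b3, b4, b5⟩⟩
  have hmem : t ∈ Hpl ![1, 0, -1, 0, 0] := by
    show ∑ j, _ = (0:ℝ)
    rw [Fin.sum_univ_five]
    norm_num [Matrix.cons_val_zero, Matrix.cons_val_one, Matrix.head_cons, Matrix.cons_val_two, Matrix.tail_cons, Matrix.cons_val_three, Matrix.cons_val_four]
    linarith
  exact Or.inr (Or.inl hmem)

lemma pair_5_6 : S5 ∩ S6 ⊆ Nset := by
  rintro t ⟨⟨a0, a1, a2, a3, a4, a5⟩, ⟨b0, b1, b2, b3, b4, b5⟩⟩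
  have hmem : t ∈ Hpl ![1, 0, -1, 0, 0] := by
    show ∑ j, _ = (0:ℝ)
    rw [Fin.sum_univ_five]
    norm_num [Matrix.cons_val_zero, Matrix.cons_val_one, Matrix.head_cons, Matrix.cons_val_two, Matrix.tail_cons, Matrix.cons_val_three, Matrix.cons_val_four]
    linarith
  exact Or.inr (Or.inl hmem)


theorem stmt_19 :
    volume {t : Fin 5 → ℝ | (∀ i, 0 ≤ t i) ∧
        t 0 + 2 * t 1 + 3 * t 2 + 2 * t 4 ≤ 1 ∧
        3 * t 0 + 2 * t 1 + t 2 + 2 * t 3 ≤ 1} =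
      ENNReal.ofReal (1 / 2160) := by
  rw [cover]
  have hm6 : NullMeasurableSet S6 volume := S6_meas.nullMeasurableSet
  have hm56 : NullMeasurableSet (S5 ∪ S6) volume := (S5_meas.union S6_meas).nullMeasurableSet
  have hm456 : NullMeasurableSet (S4 ∪ (S5 ∪ S6)) volume :=
    (S4_meas.union (S5_meas.union S6_meas)).nullMeasurableSet
  have hm3456 : NullMeasurableSet (S3 ∪ (S4 ∪ (S5 ∪ S6))) volume :=
    (S3_meas.union (S4_meas.union (S5_meas.union S6_meas))).nullMeasurableSet
  have hm23456 : NullMeasurableSet (S2 ∪ (S3 ∪ (S4 ∪ (S5 ∪ S6)))) volume :=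
    (S2_meas.union (S3_meas.union (S4_meas.union (S5_meas.union S6_meas)))).nullMeasurableSet
  have hd1 : AEDisjoint volume S1 (S2 ∪ (S3 ∪ (S4 ∪ (S5 ∪ S6)))) := by
    refine measure_mono_null ?_ Nset_null
    rintro t ⟨h, hr | hr | hr | hr | hr⟩
    · exact pair_1_2 ⟨h, hr⟩
    · exact pair_1_3 ⟨h, hr⟩
    · exact pair_1_4 ⟨h, hr⟩
    · exact pair_1_5 ⟨h, hr⟩
    · exact pair_1_6 ⟨h, hr⟩
  have hd2 : AEDisjoint volume S2 (S3 ∪ (S4 ∪ (S5 ∪ S6))) := by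
    refine measure_mono_null ?_ Nset_null
    rintro t ⟨h, hr | hr | hr | hr⟩
    · exact pair_2_3 ⟨h, hr⟩
    · exact pair_2_4 ⟨h, hr⟩
    · exact pair_2_5 ⟨h, hr⟩
    · exact pair_2_6 ⟨h, hr⟩
  have hd3 : AEDisjoint volume S3 (S4 ∪ (S5 ∪ S6)) := by
    refine measure_mono_null ?_ Nset_null
    rintro t ⟨h, hr | hr | hr⟩
    · exact pair_3_4 ⟨h, hr⟩
    · exact pair_3_5 ⟨h, hr⟩
    · exact pair_3_6 ⟨h, hr⟩
  have hd4 : AEDisjoint volume S4 (S5 ∪ S6) := by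
    refine measure_mono_null ?_ Nset_null
    rintro t ⟨h, hr | hr⟩
    · exact pair_4_5 ⟨h, hr⟩
    · exact pair_4_6 ⟨h, hr⟩
  have hd5 : AEDisjoint volume S5 S6 := measure_mono_null pair_5_6 Nset_null
  rw [measure_union₀ hm23456 hd1, measure_union₀ hm3456 hd2, measure_union₀ hm456 hd3,
    measure_union₀ hm56 hd4, measure_union₀ hm6 hd5]
  rw [S1_vol, S2_vol, S3_vol, S4_vol, S5_vol, S6_vol]
  rw [← ENNReal.ofReal_add (by norm_num) (by norm_num)]
  rw [← ENNReal.ofReal_add (by norm_num) (by norm_num)]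
  rw [← ENNReal.ofReal_add (by norm_num) (by norm_num)]
  rw [← ENNReal.ofReal_add (by norm_num) (by norm_num)]
  rw [← ENNReal.ofReal_add (by norm_num) (by norm_num)]
  norm_num
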